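/- Let K be a field of characteristic zero, let p, q ∈ K be distinct nonzero elements, define U_n = (p^n − q^n)/(p − q) and V_n = p^n + q^n, set Δ = (p − q)², and assume U_n ≠ 0 and V_n ≠ 0 for all n ≥ 1. Then for all integers r, s ≥ 1, the V-mixed-U binomial coefficients satisfy 2·M(r, s) = V_s·M(r−1, s) + Δ·U_r·M(r, s−1). -/

import Mathlib

/-- The `F`-factorial: `ffact F 0 = 1`, `ffact F n = F n * F (n-1) * ... * F 1`. -/
def ffact {K : Type*} [Field K] (F : ℕ → K) : ℕ → K
  | 0 => 1
  | n + 1 => F (n + 1) * ffact F n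

/-- The `V`-mixed-`U` binomial coefficient `M(r, s) = V_{r+s}! / (V_r! * U_s!)`. -/
def mixedBinom {K : Type*} [Field K] (V U : ℕ → K) (r s : ℕ) : K :=
  ffact V (r + s) / (ffact V r * ffact U s)

lemma ffact_ne_zero {K : Type*} [Field K] (F : ℕ → K) (hF : ∀ n, 1 ≤ n → F n ≠ 0) :
    ∀ n, ffact F n ≠ 0
  | 0 => one_ne_zero
  | n + 1 => mul_ne_zero (hF (n+1) (Nat.le_add_left 1 n)) (ffact_ne_zero F hF n)

theorem stmt12 {K : Type*} [Field K] [CharZero K] (p q : K)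
    (hp : p ≠ 0) (hq : q ≠ 0) (hpq : p ≠ q)
    (U V : ℕ → K)
    (hU : ∀ n, U n = (p ^ n - q ^ n) / (p - q))
    (hV : ∀ n, V n = p ^ n + q ^ n)
    (Δ : K) (hΔ : Δ = (p - q) ^ 2)
    (hUne : ∀ n, 1 ≤ n → U n ≠ 0) (hVne : ∀ n, 1 ≤ n → V n ≠ 0) :
    ∀ r s : ℕ, 1 ≤ r → 1 ≤ s →
      2 * mixedBinom V U r s =
        V s * mixedBinom V U (r - 1) s + Δ * U r * mixedBinom V U r (s - 1) := by
  have hpq' : p - q ≠ 0 := sub_ne_zero.mpr hpq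
  have key : ∀ r s : ℕ, 2 * V (r + s) = V r * V s + Δ * U r * U s := by
    intro r s
    rw [hU, hU, hV, hV, hV, hΔ]
    field_simp
    ring
  rintro (_|a) (_|b) hr hs
  · omega
  · omega
  · omega
  simp only [Nat.add_sub_cancel]
  simp only [mixedBinom]
  rw [show a + 1 + (b + 1) = (a + b + 1) + 1 by omega,
    show a + (b + 1) = a + b + 1 by omega,
    show a + 1 + b = a + b + 1 by omega,
    show ffact V (a + b + 1 + 1) = V (a + b + 1 + 1) * ffact V (a + b + 1) from rfl,
    show ffact V (a + 1) = V (a + 1) * ffact V a from rfl,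
    show ffact U (b + 1) = U (b + 1) * ffact U b from rfl]
  have key2 : 2 * V (a + b + 1 + 1) = V (a + 1) * V (b + 1) + Δ * U (a + 1) * U (b + 1) := by
    have h := key (a + 1) (b + 1)
    rwa [show a + 1 + (b + 1) = a + b + 1 + 1 by omega] at h
  have hFVa := ffact_ne_zero V hVne a
  have hFUb := ffact_ne_zero U hUne b
  have hFVab := ffact_ne_zero V hVne (a + b + 1)
  have hVa1 := hVne (a + 1) (by omega)
  have hUb1 := hUne (b + 1) (by omega)
  field_simp
  linear_combination key2
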